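/- Let V be a nonempty vertical path whose final step is S, and let H be a horizontal path. Define the flip f(σ) of a list σ over {E, W, N, S} to be the list obtained by replacing every maximal contiguous block of outward steps (steps in {E, N}) with the same block written in reverse order. Then f maps shuffles of V and H to shuffles of V and H, and for every shuffle σ of V and H, the shifted In-Vert of f(σ) equals the signed peak-count of σ. -/

import Mathlib

inductive Step : Type
  | E | W | N | S
deriving DecidableEq, Repr

open Step

/-- A step is vertical (North or South). -/
def isVert : Step → Bool
  | N => true
  | S => true
  | _ => false

/-- A step is horizontal (East or West). -/
def isHoriz : Step → Bool
  | E => true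
  | W => true
  | _ => false

/-- `σ` is a shuffle (interleaving) of the vertical path `V` and horizontal path `H`:
its subsequence of vertical steps is `V` and its subsequence of horizontal steps is `H`. -/
def IsShuffle (V H σ : List Step) : Prop :=
  σ.filter isVert = V ∧ σ.filter isHoriz = H

/-- The list of adjacent pairs `(σ_i, σ_{i+1})` of a list. -/
def pairs (σ : List Step) : List (Step × Step) := σ.zip σ.tail

/-- Signed peak-count: (# of (N,W) adjacent pairs) − (# of (E,S) adjacent pairs). -/
def signedPeak (σ : List Step) : ℤ :=
  (((pairs σ).filter (fun p => decide (p.1 = N ∧ p.2 = W))).length : ℤ)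
  - (((pairs σ).filter (fun p => decide (p.1 = E ∧ p.2 = S))).length : ℤ)

/-- Peak-count: (# of (N,W) adjacent pairs) + (# of (E,S) adjacent pairs). -/
def peakCount (σ : List Step) : ℕ :=
  ((pairs σ).filter (fun p => decide (p.1 = N ∧ p.2 = W))).length
  + ((pairs σ).filter (fun p => decide (p.1 = E ∧ p.2 = S))).length

/-- Binomial coefficient with integer arguments, equal to 0 unless `0 ≤ b ≤ a`. -/
def zch (a b : ℤ) : ℕ := if 0 ≤ b ∧ b ≤ a then a.toNat.choose b.toNat else 0

/-- In-Vert of `σ`: the number of indices `j ≥ 1` such that `σ_j` is vertical and either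
`j = 1` or `σ_{j−1}` is an inward step (inward steps are `{W, S}`).  This corresponds to
viewing `σ` as preceded by a virtual zeroth inward step and counting occurrences of an
inward step immediately followed by a vertical step. -/
def invert (σ : List Step) : ℕ :=
  (if σ.head? = some Step.N ∨ σ.head? = some Step.S then 1 else 0)
  + ((pairs σ).filter (fun p => decide ((p.1 = Step.W ∨ p.1 = Step.S) ∧ (p.2 = Step.N ∨ p.2 = Step.S)))).length

/-- A step is outward (East or North). -/
def isOut : Step → Bool
  | Step.E => true
  | Step.N => true
  | _ => false

/-- Auxiliary function for `flipRuns`: `acc` holds the current (reversed) maximal run of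
outward steps. -/
def flipAux : List Step → List Step → List Step
  | acc, [] => acc
  | acc, a :: rest =>
    if isOut a then flipAux (a :: acc) rest
    else acc ++ a :: flipAux [] rest

/-- The flipRuns of `σ`: every maximal contiguous block of outward steps is replaced by the
same block written in reverse order. -/
def flipRuns (σ : List Step) : List Step := flipAux [] σ


namespace FlipProof

open List

/-- count of inward-then-vertical adjacent pairs -/
def pcount (σ : List Step) : ℕ :=
  ((pairs σ).filter (fun p => decide ((p.1 = Step.W ∨ p.1 = Step.S) ∧ (p.2 = Step.N ∨ p.2 = Step.S)))).length

lemma invert_eq (σ : List Step) :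
    invert σ = (if σ.head? = some Step.N ∨ σ.head? = some Step.S then 1 else 0) + pcount σ := rfl

lemma pairs_cons_cons (a b : Step) (t : List Step) :
    pairs (a :: b :: t) = (a, b) :: pairs (b :: t) := rfl

lemma pcount_nil : pcount [] = 0 := rfl
lemma pcount_single (a : Step) : pcount [a] = 0 := rfl

lemma pcount_cons_cons (a b : Step) (t : List Step) :
    pcount (a :: b :: t) =
      (if (a = Step.W ∨ a = Step.S) ∧ (b = Step.N ∨ b = Step.S) then 1 else 0)
        + pcount (b :: t) := by
  by_cases h : (a = Step.W ∨ a = Step.S) ∧ (b = Step.N ∨ b = Step.S) <;>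
    simp [pcount, pairs_cons_cons, List.filter_cons, h] <;> omega

lemma pcount_in (i : Step) (hi : isOut i = false) (τ : List Step) :
    pcount (i :: τ) = invert τ := by
  cases τ with
  | nil => simp [pcount_single, invert_eq, pcount_nil]
  | cons b t =>
    rw [pcount_cons_cons, invert_eq]
    have hi' : i = Step.W ∨ i = Step.S := by cases i <;> simp_all [isOut]
    cases b <;> simp [hi']

lemma invert_in (i : Step) (hi : isOut i = false) (τ : List Step) :
    invert (i :: τ) = (if i = Step.S then 1 else 0) + invert τ := by
  rw [invert_eq, pcount_in i hi τ]
  cases i <;> simp_all [isOut]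

lemma invert_out (C : List Step) (hC : C ≠ []) (hout : ∀ s ∈ C, isOut s = true)
    (i : Step) (hi : isOut i = false) (τ : List Step) :
    invert (C ++ i :: τ) = (if C.head? = some Step.N then 1 else 0) + invert τ := by
  induction C with
  | nil => simp at hC
  | cons a C' ih =>
    have ha : isOut a = true := hout a (by simp)
    cases C' with
    | nil =>
      rw [List.cons_append, List.nil_append, invert_eq, pcount_cons_cons, pcount_in i hi τ]
      cases a <;> simp_all [isOut]
    | cons c t =>
      have hc : isOut c = true := hout c (by simp)
      have ihx := ih (by simp) (fun s hs => hout s (by simp [hs]))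
      have key : pcount (c :: (t ++ i :: τ)) = invert τ := by
        rw [invert_eq] at ihx
        simp only [List.cons_append] at ihx
        cases c <;> simp [isOut] at hc ihx ⊢ <;> omega
      rw [List.cons_append, List.cons_append, invert_eq, pcount_cons_cons, key]
      have ha' : ¬ (a = Step.W ∨ a = Step.S) := by cases a <;> simp_all [isOut]
      cases a <;> simp_all [isOut]

lemma sp_nil : signedPeak [] = 0 := rfl
lemma sp_single (a : Step) : signedPeak [a] = 0 := rfl

lemma sp_cons_cons (a b : Step) (t : List Step) :
    signedPeak (a :: b :: t) =
      ((if a = Step.N ∧ b = Step.W then 1 else 0)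
        - (if a = Step.E ∧ b = Step.S then 1 else 0)) + signedPeak (b :: t) := by
  by_cases h1 : a = Step.N ∧ b = Step.W <;>
    by_cases h2 : a = Step.E ∧ b = Step.S <;>
      simp [signedPeak, pairs_cons_cons, List.filter_cons, h1, h2] <;> push_cast <;> ring

lemma sp_in (i : Step) (hi : isOut i = false) (τ : List Step) :
    signedPeak (i :: τ) = signedPeak τ := by
  cases τ with
  | nil => simp [sp_single, sp_nil]
  | cons b t =>
    rw [sp_cons_cons]
    cases i <;> simp_all [isOut]

lemma sp_out (B : List Step) (hB : B ≠ []) (hout : ∀ s ∈ B, isOut s = true)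
    (i : Step) (hi : isOut i = false) (rest : List Step) :
    signedPeak (B ++ i :: rest) =
      ((if B.getLast? = some Step.N ∧ i = Step.W then 1 else 0)
        - (if B.getLast? = some Step.E ∧ i = Step.S then 1 else 0)) + signedPeak rest := by
  induction B with
  | nil => simp at hB
  | cons a B' ih =>
    have ha : isOut a = true := hout a (by simp)
    cases B' with
    | nil =>
      rw [List.cons_append, List.nil_append, sp_cons_cons, sp_in i hi rest]
      simp
    | cons c t =>
      have hc : isOut c = true := hout c (by simp)
      have ihx := ih (by simp) (fun s hs => hout s (by simp [hs]))
      rw [List.cons_append, List.cons_append, sp_cons_cons, List.getLast?_cons_cons]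
      rw [List.cons_append] at ihx
      have h1 : ¬ (a = Step.N ∧ c = Step.W) := by cases c <;> simp_all [isOut]
      have h2 : ¬ (a = Step.E ∧ c = Step.S) := by cases c <;> simp_all [isOut]
      rw [ihx]
      simp [h1, h2]

lemma dropWhile_head_false {p : Step → Bool} :
    ∀ (m : List Step) {i : Step} {rest : List Step}, m.dropWhile p = i :: rest → p i = false := by
  intro m
  induction m with
  | nil => intro i rest h; simp [List.dropWhile] at h
  | cons x xs ih =>
    intro i rest h
    rw [List.dropWhile_cons] at h
    split at h
    · exact ih h
    · cases h
      simp_all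

lemma flipAux_all (B : List Step) (h : ∀ s ∈ B, isOut s = true) :
    ∀ acc, flipAux acc B = B.reverse ++ acc := by
  induction B with
  | nil => intro acc; rfl
  | cons a t ih =>
    intro acc
    have ha : isOut a = true := h a (by simp)
    rw [flipAux, if_pos ha, ih (fun s hs => h s (by simp [hs]))]
    simp

lemma flipAux_split (B : List Step) (h : ∀ s ∈ B, isOut s = true)
    (i : Step) (hi : isOut i = false) (rest : List Step) :
    ∀ acc, flipAux acc (B ++ i :: rest) = B.reverse ++ acc ++ i :: flipRuns rest := by
  induction B with
  | nil =>
    intro acc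
    rw [List.nil_append, flipAux, if_neg (by simp [hi])]
    simp [flipRuns]
  | cons a t ih =>
    intro acc
    have ha : isOut a = true := h a (by simp)
    rw [List.cons_append, flipAux, if_pos ha, ih (fun s hs => h s (by simp [hs]))]
    simp

lemma flipRuns_all (B : List Step) (h : ∀ s ∈ B, isOut s = true) :
    flipRuns B = B.reverse := by
  rw [flipRuns, flipAux_all B h]; simp

lemma flipRuns_split (B : List Step) (h : ∀ s ∈ B, isOut s = true)
    (i : Step) (hi : isOut i = false) (rest : List Step) :
    flipRuns (B ++ i :: rest) = B.reverse ++ i :: flipRuns rest := by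
  rw [flipRuns, flipAux_split B h i hi rest]; simp

lemma flipRuns_in (i : Step) (hi : isOut i = false) (rest : List Step) :
    flipRuns (i :: rest) = i :: flipRuns rest := by
  have := flipRuns_split [] (by simp) i hi rest
  simpa using this

theorem main_ind (motive : List Step → Prop)
    (hnil : motive [])
    (hin : ∀ i l, isOut i = false → motive l → motive (i :: l))
    (hall : ∀ B, (∀ s ∈ B, isOut s = true) → motive B)
    (hout : ∀ B i l, B ≠ [] → (∀ s ∈ B, isOut s = true) → isOut i = false →
      motive l → motive (B ++ i :: l)) :
    ∀ σ, motive σ := by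
  have H : ∀ n σ, σ.length ≤ n → motive σ := by
    intro n
    induction n with
    | zero =>
      intro σ h
      have : σ = [] := by cases σ <;> simp_all
      rw [this]; exact hnil
    | succ n ih =>
      intro σ hlen
      cases σ with
      | nil => exact hnil
      | cons a l =>
        cases ha : isOut a with
        | false => exact hin a l ha (ih l (by simp at hlen; omega))
        | true =>
          have hBR : (a :: l).takeWhile isOut ++ (a :: l).dropWhile isOut = a :: l :=
            List.takeWhile_append_dropWhile ..
          have hB : ∀ s ∈ (a :: l).takeWhile isOut, isOut s = true :=
            fun s hs => List.mem_takeWhile_imp hs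
          cases hR : (a :: l).dropWhile isOut with
          | nil =>
            rw [hR, List.append_nil] at hBR
            rw [← hBR]; exact hall _ hB
          | cons i rest =>
            have hi : isOut i = false := dropWhile_head_false _ hR
            have hBne : (a :: l).takeWhile isOut ≠ [] := by
              rw [List.takeWhile_cons_of_pos ha]; simp
            have hlen' : rest.length ≤ n := by
              have := congrArg List.length hBR
              rw [hR] at this
              simp [List.length_append] at this
              have hB1 : 1 ≤ ((a :: l).takeWhile isOut).length :=
                List.length_pos_iff.mpr hBne
              simp at hlen
              omega
            rw [← hBR, hR]
            exact hout _ i rest hBne hB hi (ih rest hlen')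
  intro σ; exact H σ.length σ le_rfl

lemma all_N_reverse {l : List Step} (h : ∀ x ∈ l, x = Step.N) : l.reverse = l := by
  rw [List.eq_replicate_of_mem h, List.reverse_replicate]

lemma all_E_reverse {l : List Step} (h : ∀ x ∈ l, x = Step.E) : l.reverse = l := by
  rw [List.eq_replicate_of_mem h, List.reverse_replicate]

lemma filter_rev_out (B : List Step) (h : ∀ s ∈ B, isOut s = true) :
    B.reverse.filter isVert = B.filter isVert ∧ B.reverse.filter isHoriz = B.filter isHoriz := by
  constructor
  · rw [List.filter_reverse]
    apply all_N_reverse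
    intro x hx
    rw [List.mem_filter] at hx
    have := h x hx.1
    cases x <;> simp_all [isOut, isVert]
  · rw [List.filter_reverse]
    apply all_E_reverse
    intro x hx
    rw [List.mem_filter] at hx
    have := h x hx.1
    cases x <;> simp_all [isOut, isHoriz]

/-- flipRuns preserves the vertical and horizontal subsequences. -/
lemma flip_filters (σ : List Step) :
    (flipRuns σ).filter isVert = σ.filter isVert
      ∧ (flipRuns σ).filter isHoriz = σ.filter isHoriz := by
  induction σ using main_ind with
  | hnil => simp [flipRuns, flipAux]
  | hin i l hi ihl =>
    rw [flipRuns_in i hi l]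
    simp [List.filter_cons, ihl.1, ihl.2]
  | hall B hB =>
    rw [flipRuns_all B hB]
    exact filter_rev_out B hB
  | hout B i l hBne hB hi ihl =>
    rw [flipRuns_split B hB i hi l]
    have h1 := filter_rev_out B hB
    simp [List.filter_append, List.filter_cons, h1.1, h1.2, ihl.1, ihl.2]

lemma invert_all_E (l : List Step) (h : ∀ x ∈ l, x = Step.E) : invert l = 0 := by
  induction l with
  | nil => rfl
  | cons a t ih =>
    have ha : a = Step.E := h a (by simp)
    subst ha
    have ht := ih (fun x hx => h x (by simp [hx]))
    rw [invert_eq] at ht ⊢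
    cases t with
    | nil => simp [pcount_single]
    | cons b u =>
      have hb : b = Step.E := h b (by simp)
      subst hb
      rw [pcount_cons_cons]
      simp at ht ⊢
      omega

lemma sp_all_E (l : List Step) (h : ∀ x ∈ l, x = Step.E) : signedPeak l = 0 := by
  induction l with
  | nil => rfl
  | cons a t ih =>
    have ha : a = Step.E := h a (by simp)
    subst ha
    have ht := ih (fun x hx => h x (by simp [hx]))
    cases t with
    | nil => rfl
    | cons b u =>
      have hb : b = Step.E := h b (by simp)
      subst hb
      rw [sp_cons_cons, ht]
      simp

lemma out_all_E (B : List Step) (hB : ∀ s ∈ B, isOut s = true)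
    (h : (B.filter isVert).getLast? ≠ some Step.N) : ∀ x ∈ B, x = Step.E := by
  intro x hx
  have hxout := hB x hx
  by_contra hxe
  have hxN : x = Step.N := by
    clear h hB
    cases x <;> simp_all [isOut]
  subst hxN
  have hmem : Step.N ∈ B.filter isVert := by
    rw [List.mem_filter]; exact ⟨hx, rfl⟩
  have hne : B.filter isVert ≠ [] := fun hc => by simp [hc] at hmem
  have hallN : ∀ y ∈ B.filter isVert, y = Step.N := by
    intro y hy
    rw [List.mem_filter] at hy
    have := hB y hy.1
    cases y <;> simp_all [isOut, isVert]
  apply h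
  rw [List.getLast?_eq_getLast hne]
  exact congrArg some (hallN _ (List.getLast_mem hne))

lemma getLast?_cons_of_ne_nil (a : Step) {m : List Step} (h : m ≠ []) :
    (a :: m).getLast? = m.getLast? := by
  cases m with
  | nil => simp at h
  | cons b t => rw [List.getLast?_cons_cons]

lemma getLast?_prop_tail (A : List Step) (i : Step) (l : List Step)
    (h : (((A ++ i :: l)).filter isVert).getLast? ≠ some Step.N) :
    (l.filter isVert).getLast? ≠ some Step.N := by
  intro hc
  apply h
  have hne : l.filter isVert ≠ [] := by
    intro h0; rw [h0] at hc; simp at hc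
  rw [List.filter_append, List.filter_cons]
  split
  · rw [List.getLast?_append_of_ne_nil _ (by simp), getLast?_cons_of_ne_nil _ hne, hc]
  · rw [List.getLast?_append_of_ne_nil _ hne, hc]

/-- The key quantitative identity. -/
lemma key_identity : ∀ σ : List Step, (σ.filter isVert).getLast? ≠ some Step.N →
    (invert (flipRuns σ) : ℤ) - (σ.count Step.S : ℤ) = signedPeak σ := by
  apply main_ind
  · intro _; simp [flipRuns, flipAux, invert, pairs, signedPeak]
  · -- inward cons
    intro i l hi ihl
    intro h
    have hl : (l.filter isVert).getLast? ≠ some Step.N :=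
      getLast?_prop_tail [] i l (by simpa using h)
    have ih := ihl hl
    rw [flipRuns_in i hi l, invert_in i hi, sp_in i hi, List.count_cons]
    push_cast
    rw [← ih]
    cases i <;> simp [isOut] at hi ⊢ <;> ring
  · -- all outward
    intro B hB h
    have hE := out_all_E B hB h
    rw [flipRuns_all B hB]
    have h1 : invert B.reverse = 0 :=
      invert_all_E _ (fun x hx => hE x (List.mem_reverse.mp hx))
    have h2 : signedPeak B = 0 := sp_all_E B hE
    have h3 : B.count Step.S = 0 := by
      rw [List.count_eq_zero]
      intro hc
      have := hE _ hc
      simp at this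
    rw [h1, h2, h3]
    simp
  · -- outward block then inward
    intro B i l hBne hB hi ihl h
    have hl : (l.filter isVert).getLast? ≠ some Step.N := getLast?_prop_tail B i l h
    have ih := ihl hl
    rw [flipRuns_split B hB i hi l]
    have hrevne : B.reverse ≠ [] := by simpa using hBne
    have hrevout : ∀ s ∈ B.reverse, isOut s = true :=
      fun s hs => hB s (List.mem_reverse.mp hs)
    rw [invert_out B.reverse hrevne hrevout i hi (flipRuns l)]
    rw [sp_out B hBne hB i hi l]
    rw [List.count_append, List.count_cons]
    have hSB : B.count Step.S = 0 := by
      rw [List.count_eq_zero]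
      intro hc
      have := hB _ hc
      simp [isOut] at this
    rw [hSB]
    rw [List.head?_reverse]
    obtain ⟨a, ha⟩ : ∃ a, B.getLast? = some a :=
      Option.ne_none_iff_exists'.mp (by simp [List.getLast?_eq_getLast hBne])
    have haB : a ∈ B := by
      rw [List.getLast?_eq_getLast hBne] at ha
      rw [← Option.some_inj.mp ha]
      exact List.getLast_mem hBne
    have haout : isOut a = true := hB a haB
    rw [ha]
    push_cast
    rw [← ih]
    cases a <;> simp [isOut] at haout <;> cases i <;> simp [isOut] at hi <;> simp <;> ring

end FlipProof


/-- **Proposition (flipRuns intertwines shifted In-Vert and signed peak-count).**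
If `V` is a nonempty vertical path ending in `S` and `H` is a horizontal path, then `flipRuns`
maps shuffles of `V` and `H` to shuffles of `V` and `H`, and the shifted In-Vert of
`flipRuns σ` equals the signed peak-count of `σ`. -/
theorem flip_shifted_invert_eq_signedPeak (V H : List Step)
    (hV : ∀ s ∈ V, isVert s = true) (hVne : V ≠ [])
    (hVlast : V.getLast? = some Step.S)
    (hH : ∀ s ∈ H, isHoriz s = true) :
    (∀ σ : List Step, IsShuffle V H σ → IsShuffle V H (flipRuns σ))
    ∧ (∀ σ : List Step, IsShuffle V H σ →
        (invert (flipRuns σ) : ℤ) - ((flipRuns σ).count Step.S : ℤ) = signedPeak σ) := by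
  constructor
  · intro σ hσ
    obtain ⟨h1, h2⟩ := hσ
    have hf := FlipProof.flip_filters σ
    exact ⟨hf.1.trans h1, hf.2.trans h2⟩
  · intro σ hσ
    obtain ⟨h1, h2⟩ := hσ
    have hlast : (σ.filter isVert).getLast? ≠ some Step.N := by
      rw [h1, hVlast]; simp
    have hcount : (flipRuns σ).count Step.S = σ.count Step.S := by
      have hf := (FlipProof.flip_filters σ).1
      calc (flipRuns σ).count Step.S
          = ((flipRuns σ).filter isVert).count Step.S := (List.count_filter (by rfl)).symm
        _ = (σ.filter isVert).count Step.S := by rw [hf]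
        _ = σ.count Step.S := List.count_filter (by rfl)
    rw [hcount]
    exact FlipProof.key_identity σ hlast
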